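/- For every integer n ≥ 2, the derivative of g_n satisfies g_n'(x) = n·h_{n-2}(x). -/
import Mathlib


open Polynomial

/-- The polynomial `g_n(x) = Σ_{k=0}^{⌊n/2⌋} (n/(n−k))·binom(n−k, k)·x^k` over ℚ
for `n ≥ 1`, with `g_0 = 2`. -/
noncomputable def gP (n : ℕ) : Polynomial ℚ :=
  if n = 0 then C 2
  else ∑ k ∈ Finset.range (n / 2 + 1),
    C ((n : ℚ) / ((n : ℚ) - (k : ℚ)) * (((n - k).choose k : ℕ) : ℚ)) * X ^ k

/-- The polynomial `h_n(x) = Σ_{k=0}^{⌊n/2⌋} binom(n−k, k)·x^k` over ℚ. -/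
noncomputable def hP (n : ℕ) : Polynomial ℚ :=
  ∑ k ∈ Finset.range (n / 2 + 1), C (((n - k).choose k : ℕ) : ℚ) * X ^ k

theorem g_derivative (n : ℕ) (hn : 2 ≤ n) :
    derivative (gP n) = C (n : ℚ) * hP (n - 2) := by
  have hn0 : n ≠ 0 := by omega
  ext m
  rw [coeff_derivative, coeff_C_mul]
  simp only [gP, hP, if_neg hn0, finset_sum_coeff, coeff_C_mul, coeff_X_pow,
    mul_ite, mul_one, mul_zero, Finset.sum_ite_eq, Finset.mem_range]
  have hdiv : (n - 2) / 2 + 1 = n / 2 := by omega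
  rw [hdiv]
  by_cases hm : m < n / 2
  · rw [if_pos (by omega), if_pos hm]
    have hk : m + 1 ≤ n := by omega
    have hnk : (n : ℚ) - ((m : ℚ) + 1) = ((n - (m + 1) : ℕ) : ℚ) := by
      push_cast [hk]; ring
    have hne : ((n - (m + 1) : ℕ) : ℚ) ≠ 0 := by
      have : 0 < n - (m + 1) := by omega
      positivity
    -- key nat identity: (n-(m+1)) * C(n-(m+1)-1, m) = C(n-(m+1), m+1) * (m+1)
    have hkey : (n - (m + 1)) * (n - (m + 1) - 1).choose m
        = (n - (m + 1)).choose (m + 1) * (m + 1) := by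
      have h1 : 0 < n - (m + 1) := by omega
      rw [show n - (m + 1) = n - (m + 1) - 1 + 1 from by omega]
      exact Nat.add_one_mul_choose_eq (n - (m + 1) - 1) m
    have heq : n - 2 - m = n - (m + 1) - 1 := by omega
    rw [heq]
    have hkeyQ : ((n - (m + 1) : ℕ) : ℚ) * ((n - (m + 1) - 1).choose m : ℚ)
        = ((n - (m + 1)).choose (m + 1) : ℚ) * ((m : ℚ) + 1) := by
      exact_mod_cast congrArg (Nat.cast : ℕ → ℚ) hkey
    push_cast
    rw [hnk, div_mul_eq_mul_div, div_mul_eq_mul_div, div_eq_iff hne]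
    linear_combination (-(n : ℚ)) * hkeyQ
  · rw [if_neg (by omega), if_neg hm]
    ring
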